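/- arXiv:2007.10726 — 4 statements merged into one kernel-verified Lean document; each statement's English description precedes it below -/
import Mathlib

section
/- Let {P₁,…,Pₙ} be a Cartesian decomposition of Ω, and for J ⊆ {1,…,n} let P_J be the partition whose underlying equivalence identifies ω₁, ω₂ iff they lie in the same part of Pᵢ for all i ∈ J. Then for all J, K ⊆ {1,…,n}: P_{J∪K} = P_J ∧ P_K and P_{J∩K} = P_J ∨ P_K; in particular J ↦ P_J is an order-reversing lattice anti-isomorphism from the Boolean lattice of subsets of {1,…,n} onto its image in the partition lattice. -/
/-- For a family `P` of partitions of `Ω` and `J ⊆ {1,…,n}`, the partition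
`P_J` identifying two points iff they lie in the same part of `Pᵢ` for all
`i ∈ J`. -/
def partJ {Ω : Type*} {n : ℕ} (P : Fin n → Setoid Ω) (J : Set (Fin n)) : Setoid Ω :=
  ⟨fun x y => ∀ i ∈ J, (P i).r x y,
   ⟨fun x i _ => (P i).iseqv.refl x,
    fun h i hi => (P i).iseqv.symm (h i hi),
    fun h₁ h₂ i hi => (P i).iseqv.trans (h₁ i hi) (h₂ i hi)⟩⟩

/-- For a Cartesian decomposition `{P₁,…,Pₙ}` of `Ω`, the map `J ↦ P_J`
satisfies `P_{J∪K} = P_J ∧ P_K` and `P_{J∩K} = P_J ∨ P_K`; in particular it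
is an injective, order-reversing map from the Boolean lattice of subsets of
`{1,…,n}` into the partition lattice of `Ω`. -/
theorem cartesianLattice_antiIso {Ω : Type*} {n : ℕ} (P : Fin n → Setoid Ω)
    (h2 : ∀ i, ∃ a b : Ω, ¬ (P i).r a b)
    (hcart : ∀ f : Fin n → Ω, ∃! x : Ω, ∀ i, (P i).r x (f i)) :
    (∀ J K : Set (Fin n), partJ P (J ∪ K) = partJ P J ⊓ partJ P K) ∧
    (∀ J K : Set (Fin n), partJ P (J ∩ K) = partJ P J ⊔ partJ P K) ∧
    Function.Injective (partJ P) ∧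
    Antitone (partJ P) := by
  classical
  have hanti : Antitone (partJ P) := by
    intro J K hJK
    rw [Setoid.le_def]
    intro x y h
    change ∀ i ∈ J, (P i).r x y
    intro i hi
    exact h i (hJK hi)
  -- key: if partJ P J ≤ partJ P K then K ⊆ J
  have hkey : ∀ J K : Set (Fin n), partJ P J ≤ partJ P K → K ⊆ J := by
    intro J K hle i hiK
    by_contra hiJ
    obtain ⟨a, b, hab⟩ := h2 i
    obtain ⟨x, hx, -⟩ := hcart (fun j => if j = i then a else b)
    obtain ⟨y, hy, -⟩ := hcart (fun _ => b)
    have hxy : (partJ P J).r x y := by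
      intro j hjJ
      have hji : j ≠ i := fun h => hiJ (h ▸ hjJ)
      have hxb : (P j).r x b := by simpa [hji] using hx j
      exact (P j).trans hxb ((P j).symm (hy j))
    have hK : (partJ P K).r x y := Setoid.le_def.mp hle hxy
    have hxa : (P i).r x a := by simpa using hx i
    have hyb : (P i).r y b := hy i
    exact hab ((P i).trans ((P i).symm hxa) ((P i).trans (hK i hiK) hyb))
  refine ⟨?_, ?_, ?_, hanti⟩
  · intro J K
    apply le_antisymm
    · exact le_inf (hanti Set.subset_union_left) (hanti Set.subset_union_right)
    · rw [Setoid.le_def]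
      intro x y h
      change ∀ i ∈ J ∪ K, (P i).r x y
      intro i hi
      rcases hi with hi | hi
      · exact h.1 i hi
      · exact h.2 i hi
  · intro J K
    apply le_antisymm
    · rw [Setoid.le_def]
      intro x y h
      obtain ⟨z, hz, -⟩ := hcart (fun i => if i ∈ J then x else y)
      have h1 : (partJ P J).r x z := by
        intro i hi
        exact (P i).symm (by simpa [hi] using hz i)
      have h2' : (partJ P K).r z y := by
        intro i hi
        by_cases hiJ : i ∈ J
        · have hzx : (P i).r z x := by simpa [hiJ] using hz i
          exact (P i).trans hzx (h i ⟨hiJ, hi⟩)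
        · simpa [hiJ] using hz i
      exact (partJ P J ⊔ partJ P K).trans
        (Setoid.le_def.mp le_sup_left h1)
        (Setoid.le_def.mp le_sup_right h2')
    · exact sup_le (hanti Set.inter_subset_left) (hanti Set.inter_subset_right)
  · intro J K hJK
    exact le_antisymm (hkey K J hJK.ge) (hkey J K hJK.le)
end

section
/- Let T be a finite group and m an odd integer with m ≥ 2 (hence m ≥ 3). Define a colouring c : T^m → T by c([t₁,…,t_m]) = u₁u₂⋯u_m where uᵢ = tᵢ for odd i and uᵢ = tᵢ⁻¹ for even i. Then c is a proper colouring of the diagonal graph Γ_D(T,m): adjacent vertices receive different colours. Consequently the chromatic number of Γ_D(T,m) is at most |T|. -/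
/-- The diagonal graph `Γ_D(T,m)` on vertex set `T^m`: two distinct vertices
are adjacent iff they differ in exactly one coordinate, or one is obtained
from the other by multiplying all coordinates on the left by a fixed
non-identity element of `T`. -/
def diagGraph (T : Type*) [Group T] (m : ℕ) : SimpleGraph (Fin m → T) where
  Adj a b := a ≠ b ∧ ((∃! i, a i ≠ b i) ∨ ∃ x : T, x ≠ 1 ∧ ∀ i, b i = x * a i)
  symm := by
    constructor
    rintro a b ⟨hab, h⟩
    refine ⟨hab.symm, ?_⟩
    rcases h with ⟨i, hi, hu⟩ | ⟨x, hx, he⟩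
    · exact Or.inl ⟨i, hi.symm, fun j hj => hu j hj.symm⟩
    · exact Or.inr ⟨x⁻¹, inv_ne_one.mpr hx, fun i => by rw [he i, inv_mul_cancel_left]⟩
  loopless := ⟨fun a h => h.1 rfl⟩

/-- The colouring `c([t₁,…,t_m]) = u₁u₂⋯u_m` where `uᵢ = tᵢ` for odd `i` and
`uᵢ = tᵢ⁻¹` for even `i` (positions counted from 1, so 0-based index `i` uses
`t i` when `i` is even). -/
def oddColouring {T : Type*} [Group T] (m : ℕ) (t : Fin m → T) : T :=
  (List.ofFn fun i : Fin m => if (i : ℕ) % 2 = 0 then t i else (t i)⁻¹).prod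

lemma ofFn_update' {α : Type*} {m : ℕ} (f : Fin m → α) (i : Fin m) (x : α) :
    List.ofFn (Function.update f i x) = (List.ofFn f).set i x := by
  apply List.ext_getElem
  · simp
  · intro n h1 h2
    simp only [List.getElem_ofFn, List.getElem_set, List.getElem_ofFn]
    rcases eq_or_ne (i : ℕ) n with h | h
    · rw [if_pos h]
      have : (⟨n, by simpa using h2⟩ : Fin m) = i := Fin.ext h.symm
      rw [this, Function.update_self]
    · rw [if_neg h, Function.update_of_ne (fun hc => h (congrArg Fin.val hc).symm)]

lemma prod_set_ne' {T : Type*} [Group T] (l : List T) (i : ℕ) (hi : i < l.length)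
    (x y : T) (hxy : x ≠ y) : (l.set i x).prod ≠ (l.set i y).prod := by
  rw [List.prod_set, List.prod_set, if_pos hi, if_pos hi]
  intro h
  exact hxy (mul_left_cancel (mul_right_cancel h))

lemma oddColouring_smul {T : Type*} [Group T] (x : T) :
    ∀ (m : ℕ), Odd m → ∀ a : Fin m → T,
      (List.ofFn fun i : Fin m =>
        if (i : ℕ) % 2 = 0 then x * a i else (x * a i)⁻¹).prod
      = x * (List.ofFn fun i : Fin m =>
        if (i : ℕ) % 2 = 0 then a i else (a i)⁻¹).prod
  | 0, h, _ => absurd h (by simp)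
  | 1, _, a => by simp
  | (n+2), h, a => by
    have hn : Odd n := by rcases h with ⟨t, ht⟩; exact ⟨t - 1, by omega⟩
    have H := oddColouring_smul x n hn (fun i => a i.succ.succ)
    conv_lhs => rw [List.ofFn_succ, List.ofFn_succ]
    conv_rhs => rw [List.ofFn_succ, List.ofFn_succ]
    have hmod : ∀ n : ℕ, (n + 1 + 1) % 2 = n % 2 := fun n => by omega
    simp only [Fin.val_succ, Fin.val_zero, hmod, List.prod_cons]
    rw [H]
    norm_num
    group

lemma oddColouring_proper {T : Type*} [Group T] {m : ℕ} (hodd : Odd m)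
    (a b : Fin m → T) (hab : (diagGraph T m).Adj a b) :
    oddColouring m a ≠ oddColouring m b := by
  obtain ⟨hne, h⟩ := hab
  rcases h with ⟨i, hi, hu⟩ | ⟨x, hx, he⟩
  · -- differ in exactly one coordinate
    set fb : Fin m → T := fun j => if (j : ℕ) % 2 = 0 then b j else (b j)⁻¹ with hfb
    set fa : Fin m → T := fun j => if (j : ℕ) % 2 = 0 then a j else (a j)⁻¹ with hfa
    have hupd : fa = Function.update fb i (fa i) := by
      funext j
      rcases eq_or_ne j i with rfl | hji
      · rw [Function.update_self]
      · rw [Function.update_of_ne hji]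
        have : a j = b j := by
          by_contra hc
          exact hji (hu j hc)
        simp only [hfa, hfb, this]
    have hfne : fa i ≠ fb i := by
      simp only [hfa, hfb]
      by_cases hp : (i : ℕ) % 2 = 0
      · simpa [hp] using hi
      · simpa [hp] using fun hc => hi (inv_injective hc)
    have h1 : oddColouring m a = ((List.ofFn fb).set i (fa i)).prod := by
      rw [oddColouring, ← hfa, hupd, ofFn_update']
      simp
    have h2 : oddColouring m b = ((List.ofFn fb).set i (fb i)).prod := by
      rw [oddColouring, ← hfb, ← Function.update_eq_self i fb, ofFn_update',
        Function.update_eq_self]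
      simp [List.set_set]
    rw [h1, h2]
    exact prod_set_ne' _ _ (by simp [i.isLt]) _ _ hfne
  · -- translate by x
    have : oddColouring m b = x * oddColouring m a := by
      have := oddColouring_smul x m hodd a
      rw [oddColouring, oddColouring]
      simp only [he]
      exact this
    rw [this]
    intro hc
    exact hx (by
      have := mul_right_cancel (a := oddColouring m a) (b := (1 : T)) (c := x)
      nth_rewrite 1 [← one_mul (oddColouring m a)] at hc
      exact (mul_right_cancel hc.symm).symm ▸ rfl)

/-- For odd `m ≥ 2` (hence `m ≥ 3`), the alternating-product colouring is a
proper colouring of the diagonal graph `Γ_D(T,m)`; consequently the chromatic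
number of `Γ_D(T,m)` is at most `|T|`. -/
theorem diagGraph_proper_colouring_odd {T : Type*} [Group T] [Fintype T]
    {m : ℕ} (hodd : Odd m) (hm : 2 ≤ m) :
    (∀ a b : Fin m → T, (diagGraph T m).Adj a b →
      oddColouring m a ≠ oddColouring m b) ∧
    (diagGraph T m).chromaticNumber ≤ (Fintype.card T : ℕ∞) := by
  refine ⟨fun a b hab => oddColouring_proper hodd a b hab, ?_⟩
  have C : (diagGraph T m).Coloring T :=
    SimpleGraph.Coloring.mk (oddColouring m)
      (fun {a b} hab => oddColouring_proper hodd a b hab)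
  exact C.colorable.chromaticNumber_le
end

section
/- Let T be a finite group admitting a complete mapping φ with associated orthomorphism ψ(x) = xφ(x), and let m ≥ 2 be even. Define c : T^m → T by c([t₁,…,t_m]) = t₁⁻¹t₂t₃⁻¹t₄⋯t_{m-1}⁻¹ψ(t_m). Then c is a proper colouring of the diagonal graph Γ_D(T,m), so the chromatic number of Γ_D(T,m) equals |T|. -/
/-- The colouring `c([t₁,…,t_m]) = t₁⁻¹t₂t₃⁻¹t₄⋯t_{m-1}⁻¹ψ(t_m)` where
`ψ(x) = xφ(x)` is the orthomorphism associated with a complete mapping `φ`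
(0-based: even-index coordinates are inverted, and the last coordinate is
replaced by `ψ` of it). -/
def hpColouring {T : Type*} [Group T] (m : ℕ) (φ : T → T) (t : Fin m → T) : T :=
  (List.ofFn fun i : Fin m =>
    if (i : ℕ) = m - 1 then t i * φ (t i)
    else if (i : ℕ) % 2 = 0 then (t i)⁻¹ else t i).prod

private lemma prod_ofFn_cancel {T : Type*} [Group T] :
    ∀ {m : ℕ} (f g : Fin m → T) (i : Fin m),
      (∀ j, j ≠ i → f j = g j) →
      (List.ofFn f).prod = (List.ofFn g).prod → f i = g i := by
  intro m
  induction m with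
  | zero => exact fun f g i => i.elim0
  | succ n ih =>
    intro f g i hj hp
    rw [List.ofFn_succ, List.ofFn_succ, List.prod_cons, List.prod_cons] at hp
    rcases Fin.eq_zero_or_eq_succ i with rfl | ⟨j, rfl⟩
    · have ht : (fun k : Fin n => f k.succ) = fun k => g k.succ :=
        funext fun k => hj k.succ (Fin.succ_ne_zero k)
      rw [ht] at hp
      exact mul_right_cancel hp
    · have h0 : f 0 = g 0 := hj 0 (Fin.succ_ne_zero j).symm
      rw [h0] at hp
      exact ih _ _ j (fun k hk => hj k.succ fun h => hk (Fin.succ_injective n h))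
        (mul_left_cancel hp)

private lemma alt_prod_smul {T : Type*} [Group T] (x : T) :
    ∀ (n : ℕ), Even n → ∀ (c : Fin n → T),
      (List.ofFn fun i : Fin n => if (i : ℕ) % 2 = 0 then (x * c i)⁻¹ else x * c i).prod =
      (List.ofFn fun i : Fin n => if (i : ℕ) % 2 = 0 then (c i)⁻¹ else c i).prod := by
  intro n
  induction n using Nat.strong_induction_on with
  | _ n ih =>
    match n with
    | 0 => intro _ c; simp
    | 1 => intro h _; exact absurd h (by decide)
    | (k+2) =>
      intro hk c
      have hk' : Even k := by
        rcases hk with ⟨r, hr⟩; exact ⟨r - 1, by omega⟩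
      have h2 : ∀ j : ℕ, (j + 1 + 1) % 2 = j % 2 := fun j => by omega
      simp only [List.ofFn_succ, List.prod_cons, Fin.val_succ, Fin.val_zero, h2]
      simp only [Nat.reduceMod, reduceIte]
      have := ih k (by omega) hk' (fun i : Fin k => c i.succ.succ)
      rw [this]
      simp [mul_assoc, mul_inv_rev, inv_mul_cancel_left]

private lemma hp_split {T : Type*} [Group T] (φ : T → T) (k : ℕ) (hk : Even k)
    (t : Fin (k + 2) → T) :
    hpColouring (k + 2) φ t =
      (List.ofFn fun i : Fin k =>
          if (i : ℕ) % 2 = 0 then (t (Fin.castAdd 2 i))⁻¹ else t (Fin.castAdd 2 i)).prod *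
        ((t (Fin.natAdd k 0))⁻¹ *
          (t (Fin.natAdd k 1) * φ (t (Fin.natAdd k 1)))) := by
  unfold hpColouring
  rw [List.ofFn_add, List.prod_append]
  congr 1
  · refine congrArg List.prod (congrArg List.ofFn (funext fun i => ?_))
    have h1 : ((Fin.castAdd 2 i : Fin (k + 2)) : ℕ) = (i : ℕ) := rfl
    have h2 : ¬ ((i : ℕ) = k + 2 - 1) := by have := i.isLt; omega
    have h2' : ¬ ((i : ℕ) = k + 1) := by have := i.isLt; omega
    simp [h1, h2, h2']
    rfl
  · have hv0 : ((Fin.natAdd k (0 : Fin 2) : Fin (k + 2)) : ℕ) = k := by simp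
    have hv1 : ((Fin.natAdd k (1 : Fin 2) : Fin (k + 2)) : ℕ) = k + 1 := by simp
    have hne : ¬ (k = k + 2 - 1) := by omega
    have hmod : k % 2 = 0 := Nat.even_iff.mp hk
    have heq1 : k + 1 = k + 2 - 1 := by omega
    simp only [List.ofFn_succ, List.ofFn_zero, List.prod_cons, List.prod_nil]
    have e0 : ((0 : Fin 1)).succ = (1 : Fin 2) := rfl
    simp only [Fin.succ_zero_eq_one, hv0, hv1, hne, hmod, heq1, if_true, if_false,
      ite_true, ite_false, if_neg hne, mul_one]

/-- If the finite group `T` has a complete mapping `φ` (so that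
`ψ : x ↦ xφ(x)` is also a bijection) and `m ≥ 2` is even, then `hpColouring`
is a proper colouring of `Γ_D(T,m)`, and the chromatic number of `Γ_D(T,m)`
equals `|T|`. -/
theorem diagGraph_proper_colouring_even {T : Type*} [Group T] [Fintype T]
    {m : ℕ} (φ : T → T) (hφ : Function.Bijective φ)
    (hψ : Function.Bijective fun x : T => x * φ x)
    (hm : Even m) (hm2 : 2 ≤ m) :
    (∀ a b : Fin m → T, (diagGraph T m).Adj a b →
      hpColouring m φ a ≠ hpColouring m φ b) ∧
    (diagGraph T m).chromaticNumber = (Fintype.card T : ℕ∞) := by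
  obtain ⟨k, hk, rfl⟩ : ∃ k, Even k ∧ m = k + 2 := by
    refine ⟨m - 2, ?_, by omega⟩
    rcases hm with ⟨r, rfl⟩
    exact ⟨r - 1, by omega⟩
  have proper : ∀ a b : Fin (k + 2) → T, (diagGraph T (k + 2)).Adj a b →
      hpColouring (k + 2) φ a ≠ hpColouring (k + 2) φ b := by
    intro a b hadj heq
    obtain ⟨hab, hcase⟩ := (show _ ∧ _ from hadj)
    rcases hcase with ⟨i, hi, hu⟩ | ⟨x, hx, hxb⟩
    · -- differ in exactly one coordinate
      have hjs : ∀ j, j ≠ i → a j = b j := by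
        intro j hj
        by_contra h
        exact hj (hu j h)
      have key := prod_ofFn_cancel
        (fun j : Fin (k + 2) => if (j : ℕ) = k + 2 - 1 then a j * φ (a j)
          else if (j : ℕ) % 2 = 0 then (a j)⁻¹ else a j)
        (fun j : Fin (k + 2) => if (j : ℕ) = k + 2 - 1 then b j * φ (b j)
          else if (j : ℕ) % 2 = 0 then (b j)⁻¹ else b j)
        i (fun j hj => by rw [hjs j hj]) heq
      have hab' : a i = b i := by
        by_cases h1 : (i : ℕ) = k + 2 - 1
        · rw [if_pos h1, if_pos h1] at key
          exact hψ.1 key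
        · rw [if_neg h1, if_neg h1] at key
          by_cases h2 : (i : ℕ) % 2 = 0
          · rw [if_pos h2, if_pos h2] at key
            exact inv_injective key
          · rwa [if_neg h2, if_neg h2] at key
      exact hi hab'
    · -- left translation by x ≠ 1
      rw [hp_split φ k hk a, hp_split φ k hk b] at heq
      simp only [hxb] at heq
      rw [alt_prod_smul x k hk (fun i : Fin k => a (Fin.castAdd 2 i))] at heq
      have h1 := mul_left_cancel heq
      rw [mul_inv_rev, mul_assoc ((a (Fin.natAdd k 0))⁻¹) x⁻¹] at h1
      have h1' := mul_left_cancel h1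
      simp only [mul_assoc, inv_mul_cancel_left] at h1'
      have h4 : a (Fin.natAdd k 1) = x * a (Fin.natAdd k 1) :=
        hφ.1 (mul_left_cancel h1')
      exact hx (mul_eq_right.mp h4.symm)
  refine ⟨proper, ?_⟩
  have C : (diagGraph T (k + 2)).Coloring T :=
    SimpleGraph.Coloring.mk (hpColouring (k + 2) φ) (fun {a b} h => proper a b h)
  refine le_antisymm C.colorable.chromaticNumber_le ?_
  classical
  have hinj : Function.Injective (fun x : T => Function.const (Fin (k + 2)) x) := by
    intro x y h
    exact congrFun h 0
  set s : Finset (Fin (k + 2) → T) :=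
    Finset.univ.image (fun x : T => Function.const (Fin (k + 2)) x) with hs
  have hclq : (diagGraph T (k + 2)).IsClique (s : Set (Fin (k + 2) → T)) := by
    intro p hp q hq hpq
    simp only [hs, Finset.coe_image, Set.mem_image, Finset.coe_univ, Set.mem_univ,
      true_and] at hp hq
    obtain ⟨y, rfl⟩ := hp
    obtain ⟨z, rfl⟩ := hq
    show _ ∧ _
    refine ⟨hpq, Or.inr ⟨z * y⁻¹, ?_, fun i => ?_⟩⟩
    · intro h
      have : z = y := by
        have := congrArg (· * y) h
        simpa [inv_mul_cancel_right] using this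
      exact hpq (by rw [this])
    · simp [Function.const, inv_mul_cancel_right]
  have hcard : s.card = Fintype.card T := by
    rw [hs, Finset.card_image_of_injective _ hinj, Finset.card_univ]
  have := hclq.card_le_chromaticNumber
  rwa [hcard] at this
end

section
/- For any finite group T and integer m ≥ 3, the map from T^m to T^{m−2} sending [t₁,t₂,…,t_m] to [t₁t₂⁻¹t₃, t₄, …, t_m] is a graph homomorphism from the diagonal graph Γ_D(T,m) to Γ_D(T,m−2): it maps adjacent vertices to adjacent vertices. Consequently χ(Γ_D(T,m)) ≤ χ(Γ_D(T,m−2)). -/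
/-- The map `[t₁,t₂,…,t_m] ↦ [t₁t₂⁻¹t₃, t₄, …, t_m]` from `T^m` to `T^{m−2}`. -/
def diagContract (T : Type*) [Group T] (m : ℕ) (hm : 3 ≤ m)
    (t : Fin m → T) : Fin (m - 2) → T := fun j =>
  if (j : ℕ) = 0 then
    t ⟨0, by omega⟩ * (t ⟨1, by omega⟩)⁻¹ * t ⟨2, by omega⟩
  else t ⟨(j : ℕ) + 2, by have := j.isLt; omega⟩

theorem diagGraph_key {T : Type*} [Group T]
    {m : ℕ} (hm : 3 ≤ m) :
    ∀ a b : Fin m → T, (diagGraph T m).Adj a b →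
      (diagGraph T (m - 2)).Adj (diagContract T m hm a) (diagContract T m hm b) := by
  intro a b ⟨hab, h⟩
  have h0 : (0 : ℕ) < m - 2 := by omega
  set fa := diagContract T m hm a with hfa
  set fb := diagContract T m hm b with hfb
  rcases h with ⟨i, hi, hu⟩ | ⟨x, hx, he⟩
  · have heq : ∀ j : Fin m, (j : ℕ) ≠ (i : ℕ) → a j = b j := by
      intro j hj
      by_contra hc
      exact hj (congrArg Fin.val (hu j hc))
    have heq' : ∀ k : ℕ, ∀ hk : k < m, k ≠ (i : ℕ) → a ⟨k, hk⟩ = b ⟨k, hk⟩ :=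
      fun k hk h' => heq ⟨k, hk⟩ h'
    by_cases hlt : (i : ℕ) < 3
    · -- image differs exactly at coordinate 0
      have hval : fa ⟨0, h0⟩ ≠ fb ⟨0, h0⟩ := by
        have hiv : (i : ℕ) = 0 ∨ (i : ℕ) = 1 ∨ (i : ℕ) = 2 := by omega
        have hieq : i = ⟨(i : ℕ), i.isLt⟩ := by ext; rfl
        simp only [hfa, hfb, diagContract, if_pos rfl]
        rcases hiv with h1 | h1 | h1
        · have e1 : a ⟨1, by omega⟩ = b ⟨1, by omega⟩ := heq' 1 (by omega) (by omega)
          have e2 : a ⟨2, by omega⟩ = b ⟨2, by omega⟩ := heq' 2 (by omega) (by omega)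
          rw [e1, e2]
          intro hcon
          apply hi
          rw [hieq]; simp only [h1]
          exact mul_right_cancel (mul_right_cancel hcon)
        · have e1 : a ⟨0, by omega⟩ = b ⟨0, by omega⟩ := heq' 0 (by omega) (by omega)
          have e2 : a ⟨2, by omega⟩ = b ⟨2, by omega⟩ := heq' 2 (by omega) (by omega)
          rw [e1, e2]
          intro hcon
          apply hi
          rw [hieq]; simp only [h1]
          exact inv_injective (mul_left_cancel (mul_right_cancel hcon))
        · have e1 : a ⟨0, by omega⟩ = b ⟨0, by omega⟩ := heq' 0 (by omega) (by omega)
          have e2 : a ⟨1, by omega⟩ = b ⟨1, by omega⟩ := heq' 1 (by omega) (by omega)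
          rw [e1, e2]
          intro hcon
          apply hi
          rw [hieq]; simp only [h1]
          exact mul_left_cancel hcon
      have hrest : ∀ j : Fin (m - 2), (j : ℕ) ≠ 0 → fa j = fb j := by
        intro j hj
        simp only [hfa, hfb, diagContract, if_neg hj]
        exact heq' _ _ (by omega)
      refine ⟨fun hc => hval (congrFun hc _), Or.inl ⟨⟨0, h0⟩, hval, ?_⟩⟩
      intro j hj
      by_contra hc
      have : (j : ℕ) ≠ 0 := fun h' => hc (by ext; exact h')
      exact hj (hrest j this)
    · -- image differs exactly at coordinate i - 2
      have him := i.isLt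
      set j0 : Fin (m - 2) := ⟨(i : ℕ) - 2, by omega⟩ with hj0
      have hval : fa j0 ≠ fb j0 := by
        simp only [hfa, hfb, diagContract, hj0, if_neg (show (i:ℕ) - 2 ≠ 0 by omega)]
        have : ((i : ℕ) - 2) + 2 = (i : ℕ) := by omega
        simp only [this]
        have hieq : (⟨(i : ℕ), by omega⟩ : Fin m) = i := by ext; rfl
        rw [hieq]; exact hi
      have hrest : ∀ j : Fin (m - 2), j ≠ j0 → fa j = fb j := by
        intro j hj
        by_cases hz : (j : ℕ) = 0
        · simp only [hfa, hfb, diagContract, if_pos hz]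
          rw [heq' 0 (by omega) (by omega), heq' 1 (by omega) (by omega),
            heq' 2 (by omega) (by omega)]
        · simp only [hfa, hfb, diagContract, if_neg hz]
          have hne : (j : ℕ) ≠ (i : ℕ) - 2 := fun h' => hj (by ext; exact h')
          exact heq' _ _ (by omega)
      refine ⟨fun hc => hval (congrFun hc _), Or.inl ⟨j0, hval, ?_⟩⟩
      intro j hj
      by_contra hc
      exact hj (hrest j hc)
  · -- diagonal case
    have hco : ∀ j : Fin (m - 2), fb j = x * fa j := by
      intro j
      by_cases hz : (j : ℕ) = 0
      · simp only [hfa, hfb, diagContract, if_pos hz, he]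
        group
      · simp only [hfa, hfb, diagContract, if_neg hz, he]
    refine ⟨?_, Or.inr ⟨x, hx, hco⟩⟩
    intro hc
    apply hx
    have := hco ⟨0, h0⟩
    rw [← hc] at this
    exact mul_eq_right.mp this.symm

/-- For any finite group `T` and `m ≥ 3`, the map
`[t₁,t₂,…,t_m] ↦ [t₁t₂⁻¹t₃, t₄, …, t_m]` is a graph homomorphism from
`Γ_D(T,m)` to `Γ_D(T,m−2)`; consequently
`χ(Γ_D(T,m)) ≤ χ(Γ_D(T,m−2))`. -/
theorem diagGraph_hom_and_chromatic {T : Type*} [Group T] [Fintype T]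
    {m : ℕ} (hm : 3 ≤ m) :
    (∀ a b : Fin m → T, (diagGraph T m).Adj a b →
      (diagGraph T (m - 2)).Adj (diagContract T m hm a) (diagContract T m hm b)) ∧
    (diagGraph T m).chromaticNumber ≤ (diagGraph T (m - 2)).chromaticNumber := by
  refine ⟨diagGraph_key hm, ?_⟩
  have f : diagGraph T m →g diagGraph T (m - 2) :=
    ⟨diagContract T m hm, fun h => diagGraph_key hm _ _ h⟩
  exact SimpleGraph.chromaticNumber_le_of_forall_imp
    (fun n hc => ⟨(hc.toColoring (by simp)).comp f⟩)
end
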